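/- Let π be a log-concave probability measure on ℝ^{d_Θ} and 𝕌 a log-concave probability measure on ℝ^{d_𝒰}, and let μ := π ⊗ 𝕌 on ℝ^D with D = d_Θ + d_𝒰; write z = (θ, u) and let P : ℝ^D → ℝ^{d_Θ} be the coordinate projection z ↦ θ. Let r : ℝ^{d_X} × ℝ^{d_Θ} → ℝ be C¹ and satisfy the growth condition ‖∇r(x, θ)‖₂ ≤ K_grow(‖(x, θ)‖₂ + 1) for all (x, θ), for some K_grow > 0. Then there exists a constant K₀ > 0, depending only on D, d_Θ, d_X, K_grow and μ (in particular not on the generator), such that for every C¹ map G⁰ : ℝ^D → ℝ^{d_X} with ‖G⁰‖_{W^{1,4}(μ)} < ∞, the variance of z ↦ r(G⁰(z), Pz) under μ satisfies Var_{z∼μ}[r(G⁰(z), Pz)] ≤ K₀ (‖G⁰‖⁴_{W^{1,4}(μ)} + 1). -/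

import Mathlib

open MeasureTheory ProbabilityTheory
open scoped ENNReal

noncomputable section

/-- `ℝ^d` with the euclidean norm. -/
abbrev Euc (d : ℕ) := EuclideanSpace ℝ (Fin d)

/-- A measure on `ℝ^d` is log-concave if it has density `exp (-ψ)` with respect to
Lebesgue measure for some convex function `ψ : ℝ^d → ℝ`. -/
def IsLogConcaveMeasure {d : ℕ} (μ : Measure (Euc d)) : Prop :=
  ∃ ψ : Euc d → ℝ, ConvexOn ℝ Set.univ ψ ∧
    μ = volume.withDensity fun x => ENNReal.ofReal (Real.exp (-ψ x))

/-- Concatenation `ℝ^a × ℝ^b → ℝ^(a+b)`. -/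
def concatE {a b : ℕ} (x : Euc a) (y : Euc b) : Euc (a + b) :=
  (EuclideanSpace.equiv (Fin (a + b)) ℝ).symm
    (Fin.append (EuclideanSpace.equiv (Fin a) ℝ x) (EuclideanSpace.equiv (Fin b) ℝ y))

/-- Coordinate projection `ℝ^(a+b) → ℝ^a` onto the first `a` coordinates. -/
def projFst (a b : ℕ) (z : Euc (a + b)) : Euc a :=
  (EuclideanSpace.equiv (Fin a) ℝ).symm
    fun i => EuclideanSpace.equiv (Fin (a + b)) ℝ z (Fin.castAdd b i)

/-- Fourth power of the weighted Sobolev norm `‖G‖_{W^{1,4}(μ)}`, namely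
`∫ ‖G‖₂⁴ dμ + ∑ i ∫ ‖∂_i G‖₂⁴ dμ`, as an extended nonnegative real. -/
def W14pow4 {D k : ℕ} (μ : Measure (Euc D)) (G : Euc D → Euc k) : ℝ≥0∞ :=
  (∫⁻ z, (‖G z‖₊ : ℝ≥0∞) ^ 4 ∂μ) +
    ∑ i : Fin D, ∫⁻ z, (‖fderiv ℝ G z (EuclideanSpace.single i 1)‖₊ : ℝ≥0∞) ^ 4 ∂μ

section Aux

open Metric Filter

lemma projFst_concatE {a b : ℕ} (x : Euc a) (y : Euc b) : projFst a b (concatE x y) = x := by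
  ext i; simp [projFst, concatE, Fin.append_left]

lemma continuous_concatE_pair {a b : ℕ} :
    Continuous (fun p : Euc a × Euc b => concatE p.1 p.2) := by
  unfold concatE
  refine (ContinuousLinearEquiv.continuous _).comp ?_
  refine continuous_pi fun i => ?_
  refine Fin.addCases (motive := fun i => Continuous fun p : Euc a × Euc b =>
      Fin.append (EuclideanSpace.equiv (Fin a) ℝ p.1) (EuclideanSpace.equiv (Fin b) ℝ p.2) i)
    (fun j => ?_) (fun j => ?_) i
  · simp only [Fin.append_left]
    exact ((continuous_apply j).comp (ContinuousLinearEquiv.continuous _)).comp continuous_fst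
  · simp only [Fin.append_right]
    exact ((continuous_apply j).comp (ContinuousLinearEquiv.continuous _)).comp continuous_snd

lemma continuous_projFst {a b : ℕ} : Continuous (projFst a b) := by
  unfold projFst
  refine (ContinuousLinearEquiv.continuous _).comp ?_
  refine continuous_pi fun i => ?_
  exact (continuous_apply _).comp (ContinuousLinearEquiv.continuous _)

lemma concatE_norm_sq {a b : ℕ} (x : Euc a) (y : Euc b) :
    ‖concatE x y‖^2 = ‖x‖^2 + ‖y‖^2 := by
  have h1 : ‖concatE x y‖^2 = ∑ i, ‖concatE x y i‖^2 := by
    rw [EuclideanSpace.norm_eq, Real.sq_sqrt (by positivity)]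
  have h2 : ‖x‖^2 = ∑ i, ‖x i‖^2 := by
    rw [EuclideanSpace.norm_eq, Real.sq_sqrt (by positivity)]
  have h3 : ‖y‖^2 = ∑ i, ‖y i‖^2 := by
    rw [EuclideanSpace.norm_eq, Real.sq_sqrt (by positivity)]
  rw [h1, h2, h3, Fin.sum_univ_add]
  congr 1
  · exact Finset.sum_congr rfl fun i _ => by simp [concatE, Fin.append_left]
  · exact Finset.sum_congr rfl fun i _ => by simp [concatE, Fin.append_right]

lemma exists_linear_growth {d : ℕ} {ψ : Euc d → ℝ} (hψ : ConvexOn ℝ Set.univ ψ)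
    (hmass : ∫⁻ x, ENNReal.ofReal (Real.exp (-ψ x)) ∂(volume : Measure (Euc d)) = 1) :
    ∃ a > (0:ℝ), ∃ b : ℝ, ∀ x, a * ‖x‖ - b ≤ ψ x := by
  have hcont : Continuous ψ := by
    have := hψ.continuousOn isOpen_univ
    rwa [continuousOn_univ] at this
  obtain ⟨xt, hxt, hxtmax⟩ := (isCompact_closedBall (0 : Euc d) 1).exists_isMaxOn
    ⟨0, by simp⟩ hcont.continuousOn
  set t := ψ xt with ht
  have hψ0 : ψ 0 ≤ t := hxtmax (by simp : (0:Euc d) ∈ closedBall 0 1)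
  set S : Set (Euc d) := {x | ψ x ≤ t + 1} with hS
  have hSmeas : MeasurableSet S := measurableSet_le (hcont.measurable) measurable_const
  have hexp0 : ENNReal.ofReal (Real.exp (-(t+1))) ≠ 0 := by simp [Real.exp_pos]
  have hSfin : volume S ≠ ⊤ := by
    intro htop
    have hle : ∫⁻ x in S, ENNReal.ofReal (Real.exp (-(t+1))) ∂volume
        ≤ ∫⁻ x, ENNReal.ofReal (Real.exp (-ψ x)) ∂(volume : Measure (Euc d)) := by
      refine le_trans (setLIntegral_mono (by fun_prop) ?_) (setLIntegral_le_lintegral _ _)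
      intro x hx
      exact ENNReal.ofReal_le_ofReal (Real.exp_le_exp.mpr (by simp only [neg_le_neg_iff]; exact hx))
    rw [setLIntegral_const, htop, hmass, ENNReal.mul_top hexp0] at hle
    exact (by simp : ¬ (⊤:ℝ≥0∞) ≤ 1) hle
  have key : ∃ R : ℝ, 1 < R ∧ ∀ x : Euc d, ‖x‖ = R → t + 1 ≤ ψ x := by
    by_contra hcon
    push_neg at hcon
    have hpick : ∀ n : ℕ, ∃ x : Euc d, ‖x‖ = 4*(n+1) ∧ ψ x < t + 1 := by
      intro n
      obtain ⟨x, hx1, hx2⟩ := hcon (4*(n+1)) (by nlinarith [Nat.cast_nonneg (α := ℝ) n])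
      exact ⟨x, hx1, hx2⟩
    choose x hxn hxψ using hpick
    set c : ℕ → Euc d := fun n => (1/2 : ℝ) • x n with hc
    have hcnorm : ∀ n, ‖c n‖ = 2*((n:ℝ)+1) := by
      intro n
      rw [hc]
      simp only
      rw [norm_smul, hxn, Real.norm_eq_abs, abs_of_pos (by norm_num : (0:ℝ) < 1/2)]
      ring
    have hball : ∀ n, ball (c n) (1/2) ⊆ S := by
      intro n p hp
      set u := (2:ℝ) • (p - c n) with hu
      have hunorm : ‖u‖ < 1 := by
        rw [hu, norm_smul]
        have := mem_ball_iff_norm.mp hp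
        rw [Real.norm_eq_abs]
        norm_num
        linarith
      have hpeq : p = (1/2 : ℝ) • x n + (1/2 : ℝ) • u := by
        rw [hu, hc]; simp only; module
      have hcvx := hψ.2 (Set.mem_univ (x n)) (Set.mem_univ u)
        (by norm_num : (0:ℝ) ≤ 1/2) (by norm_num : (0:ℝ) ≤ 1/2) (by norm_num)
      rw [← hpeq] at hcvx
      have hu' : ψ u ≤ t := hxtmax (mem_closedBall_zero_iff.mpr hunorm.le)
      have hx' : ψ (x n) < t + 1 := hxψ n
      simp only [smul_eq_mul] at hcvx
      show ψ p ≤ t + 1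
      calc ψ p ≤ 1/2 * ψ (x n) + 1/2 * ψ u := hcvx
        _ ≤ t + 1 := by linarith
    have hdisj : Pairwise (Function.onFun Disjoint (fun n => ball (c n) (1/2 : ℝ))) := by
      intro n m hnm
      refine ball_disjoint_ball ?_
      have h1 : |‖c n‖ - ‖c m‖| ≤ dist (c n) (c m) := abs_norm_sub_norm_le _ _
      have hnm' : (1:ℝ) ≤ |(n:ℝ) - (m:ℝ)| := by
        rcases lt_or_gt_of_ne hnm with h | h
        · rw [abs_sub_comm, abs_of_pos (sub_pos.mpr (by exact_mod_cast h))]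
          have : (n:ℝ) + 1 ≤ (m:ℝ) := by exact_mod_cast h
          linarith
        · rw [abs_of_pos (sub_pos.mpr (by exact_mod_cast h))]
          have : (m:ℝ) + 1 ≤ (n:ℝ) := by exact_mod_cast h
          linarith
      have h2 : (1:ℝ) ≤ |‖c n‖ - ‖c m‖| := by
        rw [hcnorm, hcnorm]
        have he : 2*((n:ℝ)+1) - 2*((m:ℝ)+1) = 2*((n:ℝ)-(m:ℝ)) := by ring
        rw [he, abs_mul, abs_two]
        linarith
      linarith
    have hvol : volume (⋃ n, ball (c n) (1/2 : ℝ))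
        = ∑' (_ : ℕ), volume (ball (0 : Euc d) (1/2:ℝ)) := by
      rw [measure_iUnion hdisj fun n => measurableSet_ball]
      exact tsum_congr fun n => Measure.addHaar_ball_center volume (c n) _
    have hpos : volume (ball (0 : Euc d) (1/2:ℝ)) ≠ 0 :=
      (measure_ball_pos volume 0 (by norm_num)).ne'
    have htop : volume S = ⊤ := by
      refine top_le_iff.mp ?_
      calc (⊤:ℝ≥0∞) = ∑' (_ : ℕ), volume (ball (0 : Euc d) (1/2:ℝ)) :=
            (ENNReal.tsum_const_eq_top_of_ne_zero hpos).symm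
        _ = volume (⋃ n, ball (c n) (1/2:ℝ)) := hvol.symm
        _ ≤ volume S := measure_mono (Set.iUnion_subset hball)
    exact hSfin htop
  obtain ⟨R, hR1, hRψ⟩ := key
  have hR0 : (0:ℝ) < R := lt_trans zero_lt_one hR1
  obtain ⟨xl, hxl, hxlmin⟩ := (isCompact_closedBall (0 : Euc d) R).exists_isMinOn
    ⟨0, by simp [hR0.le]⟩ hcont.continuousOn
  set lo := ψ xl with hlo
  refine ⟨1/R, by positivity, max (1/R*R - lo) (-t), fun x => ?_⟩
  rcases le_or_gt ‖x‖ R with hx | hx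
  · have hlo' : lo ≤ ψ x := hxlmin (mem_closedBall_zero_iff.mpr hx)
    have h1 : 1/R * ‖x‖ ≤ 1/R * R := mul_le_mul_of_nonneg_left hx (by positivity)
    have := le_max_left (1/R*R - lo) (-t)
    linarith
  · have hxpos : (0:ℝ) < ‖x‖ := lt_trans hR0 hx
    set lam := R / ‖x‖ with hlam
    have hlam0 : 0 < lam := by positivity
    have hlam1 : lam ≤ 1 := by rw [hlam, div_le_one hxpos]; exact hx.le
    have hy : ‖lam • x‖ = R := by
      rw [norm_smul, Real.norm_eq_abs, abs_of_pos hlam0, hlam]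
      field_simp
    have hcvx := hψ.2 (Set.mem_univ x) (Set.mem_univ (0:Euc d)) hlam0.le
      (sub_nonneg.mpr hlam1) (by ring)
    rw [smul_zero, add_zero] at hcvx
    simp only [smul_eq_mul] at hcvx
    have h1 : t + 1 ≤ ψ (lam • x) := hRψ _ hy
    have h3 : (1-lam) * ψ 0 ≤ (1-lam) * t :=
      mul_le_mul_of_nonneg_left hψ0 (sub_nonneg.mpr hlam1)
    have h4 : 1 + lam * t ≤ lam * ψ x := by nlinarith
    have h5 : (1 + lam*t)/lam ≤ ψ x := (div_le_iff₀ hlam0).mpr (by nlinarith)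
    have h6 : (1+lam*t)/lam = 1/R * ‖x‖ + t := by
      rw [hlam]
      field_simp
    have := le_max_right (1/R*R - lo) (-t)
    linarith

lemma exists_poly_exp_bound (a : ℝ) (ha : 0 < a) (m : ℕ) :
    ∃ C : ℝ, 0 ≤ C ∧ ∀ s : ℝ, 0 ≤ s → (1+s)^m * Real.exp (-(a*s)) ≤ C := by
  have T0 : Tendsto (fun u : ℝ => u^m * Real.exp (-u)) atTop (nhds 0) :=
    Real.tendsto_pow_mul_exp_neg_atTop_nhds_zero m
  have T1 : Tendsto (fun s : ℝ => (a*s)^m * Real.exp (-(a*s))) atTop (nhds 0) :=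
    T0.comp (tendsto_id.const_mul_atTop ha)
  have T2 : Tendsto (fun s : ℝ => s^m * Real.exp (-(a*s))) atTop (nhds 0) := by
    have h := T1.const_mul ((a^m)⁻¹)
    rw [mul_zero] at h
    refine h.congr fun s => ?_
    rw [mul_pow]
    field_simp
  have T3 : Tendsto (fun s : ℝ => (1+s)^m * Real.exp (-(a*(1+s)))) atTop (nhds 0) :=
    T2.comp (tendsto_atTop_add_const_left _ 1 tendsto_id)
  have T4 : Tendsto (fun s : ℝ => (1+s)^m * Real.exp (-(a*s))) atTop (nhds 0) := by
    have h := T3.mul_const (Real.exp a)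
    rw [zero_mul] at h
    refine h.congr fun s => ?_
    rw [mul_assoc, ← Real.exp_add]
    ring_nf
  have hev : ∀ᶠ s in atTop, (1+s)^m * Real.exp (-(a*s)) < 1 :=
    T4.eventually_lt_const zero_lt_one
  obtain ⟨s₀, hs₀⟩ := eventually_atTop.mp hev
  obtain ⟨sm, hsm, hmax⟩ := (isCompact_Icc (a := (0:ℝ)) (b := max s₀ 0)).exists_isMaxOn
    ⟨0, by simp [le_max_right]⟩
    (by fun_prop : Continuous fun s : ℝ => (1+s)^m * Real.exp (-(a*s))).continuousOn
  refine ⟨max ((1+sm)^m * Real.exp (-(a*sm))) 1,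
    le_trans zero_le_one (le_max_right _ 1), fun s hs => ?_⟩
  rcases le_or_gt s (max s₀ 0) with h | h
  · exact le_trans (hmax ⟨hs, h⟩) (le_max_left _ _)
  · exact le_trans (hs₀ s (le_of_lt (lt_of_le_of_lt (le_max_left _ _) h))).le (le_max_right _ _)

lemma logconcave_moment4 {d : ℕ} (π : Measure (Euc d)) [IsProbabilityMeasure π]
    (h : IsLogConcaveMeasure π) : ∫⁻ x, (‖x‖₊ : ℝ≥0∞)^4 ∂π ≠ ⊤ := by
  obtain ⟨ψ, hconv, rfl⟩ := h
  have hcont : Continuous ψ := by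
    have := hconv.continuousOn isOpen_univ
    rwa [continuousOn_univ] at this
  have hmass : ∫⁻ x, ENNReal.ofReal (Real.exp (-ψ x)) ∂(volume : Measure (Euc d)) = 1 := by
    have h1 := measure_univ
      (μ := volume.withDensity fun x : Euc d => ENNReal.ofReal (Real.exp (-ψ x)))
    rwa [withDensity_apply _ MeasurableSet.univ, setLIntegral_univ] at h1
  obtain ⟨a, ha, b, hgrow⟩ := exists_linear_growth hconv hmass
  obtain ⟨C, hC, hCb⟩ := exists_poly_exp_bound a ha (d+5)
  set C' := C * Real.exp b with hC'
  have hptwise : ∀ x : Euc d, ‖x‖^4 * Real.exp (-ψ x) ≤ C' * (1+‖x‖) ^ (-(d+1:ℝ)) := by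
    intro x
    set s := ‖x‖ with hsdef
    have hs : 0 ≤ s := norm_nonneg x
    have h1 : Real.exp (-ψ x) ≤ Real.exp (b - a*s) :=
      Real.exp_le_exp.mpr (by have := hgrow x; rw [← hsdef] at this; linarith)
    have hpow : (0:ℝ) < (1+s)^(d+1) := by positivity
    have h2 : (1+s) ^ (-(d+1:ℝ)) = ((1+s)^(d+1))⁻¹ := by
      rw [show (-(d+1:ℝ)) = -((d+1:ℕ):ℝ) by push_cast; ring,
        Real.rpow_neg (by linarith), Real.rpow_natCast]
    rw [h2, ← div_eq_mul_inv, le_div_iff₀ hpow]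
    have h3 : s^4 ≤ (1+s)^4 := pow_le_pow_left₀ hs (by linarith) 4
    calc s^4 * Real.exp (-ψ x) * (1+s)^(d+1)
        ≤ (1+s)^4 * Real.exp (b-a*s) * (1+s)^(d+1) := by
          apply mul_le_mul_of_nonneg_right _ (by positivity)
          exact mul_le_mul h3 h1 (Real.exp_pos _).le (by positivity)
      _ = Real.exp b * ((1+s)^(d+5) * Real.exp (-(a*s))) := by
          rw [sub_eq_add_neg, Real.exp_add,
            show (1+s)^(d+5) = (1+s)^(d+1) * (1+s)^4 from pow_add (1+s) (d+1) 4]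
          ring
      _ ≤ Real.exp b * C := mul_le_mul_of_nonneg_left (hCb s hs) (Real.exp_pos b).le
      _ = C' := by rw [hC']; ring
  have hmeas_dens : Measurable fun x : Euc d => ENNReal.ofReal (Real.exp (-ψ x)) := by fun_prop
  rw [lintegral_withDensity_eq_lintegral_mul _ hmeas_dens (by fun_prop)]
  have hF : Integrable (fun x : Euc d => C' * (1+‖x‖) ^ (-(d+1:ℝ))) volume := by
    refine (integrable_one_add_norm ?_).const_mul C'
    rw [finrank_euclideanSpace_fin]; norm_num
  have hbound : ∀ x : Euc d,
      (fun x : Euc d => ENNReal.ofReal (Real.exp (-ψ x)) * (‖x‖₊:ℝ≥0∞)^4) x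
      ≤ ENNReal.ofReal (C' * (1+‖x‖) ^ (-(d+1:ℝ))) := by
    intro x
    have hn : ((‖x‖₊:ℝ≥0∞))^4 = ENNReal.ofReal (‖x‖^4) := by
      rw [ENNReal.ofReal_pow (norm_nonneg x), ofReal_norm, enorm_eq_nnnorm]
    simp only
    rw [hn, ← ENNReal.ofReal_mul (Real.exp_pos _).le]
    exact ENNReal.ofReal_le_ofReal (by rw [mul_comm]; exact hptwise x)
  have hfin : ∫⁻ x, ENNReal.ofReal (C' * (1+‖x‖) ^ (-(d+1:ℝ))) ∂(volume : Measure (Euc d)) < ⊤ := by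
    refine lt_of_le_of_lt (lintegral_mono fun x => ?_) hF.2
    rw [Real.enorm_eq_ofReal_abs]
    exact ENNReal.ofReal_le_ofReal (le_abs_self _)
  exact ne_top_of_le_ne_top hfin.ne (lintegral_mono hbound)

lemma integral_norm_pow4 {α : Type*} [MeasurableSpace α] (μ : Measure α) {E : Type*}
    [NormedAddCommGroup E] (f : α → E) (hf : AEStronglyMeasurable f μ) :
    ∫ x, ‖f x‖^4 ∂μ = (∫⁻ x, (‖f x‖₊:ℝ≥0∞)^4 ∂μ).toReal := by
  rw [integral_eq_lintegral_of_nonneg_ae (Filter.Eventually.of_forall fun x => by positivity)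
    (show AEStronglyMeasurable (fun x => ‖f x‖^4) μ from hf.norm.pow 4)]
  congr 1
  refine lintegral_congr fun x => ?_
  rw [ENNReal.ofReal_pow (norm_nonneg _), ofReal_norm, enorm_eq_nnnorm]

end Aux

/-- **Level-0 variance bound (Theorem 1 of the paper, NLE case, base level).** -/
theorem level0_variance_bound
    (dΘ dU dX : ℕ)
    (π : Measure (Euc dΘ)) (𝕌 : Measure (Euc dU))
    [IsProbabilityMeasure π] [IsProbabilityMeasure 𝕌]
    (hπ : IsLogConcaveMeasure π) (h𝕌 : IsLogConcaveMeasure 𝕌)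
    (Kgrow : ℝ) (hKgrow : 0 < Kgrow) :
    ∃ K₀ > (0 : ℝ),
      ∀ r : Euc (dX + dΘ) → ℝ, ContDiff ℝ 1 r →
        (∀ v : Euc (dX + dΘ), ‖fderiv ℝ r v‖ ≤ Kgrow * (‖v‖ + 1)) →
      ∀ G0 : Euc (dΘ + dU) → Euc dX, ContDiff ℝ 1 G0 →
        W14pow4 (Measure.map (fun p : Euc dΘ × Euc dU => concatE p.1 p.2) (π.prod 𝕌)) G0 ≠ ⊤ →
        variance
            (fun z : Euc (dΘ + dU) => r (concatE (G0 z) (projFst dΘ dU z)))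
            (Measure.map (fun p : Euc dΘ × Euc dU => concatE p.1 p.2) (π.prod 𝕌))
          ≤ K₀ *
            ((W14pow4 (Measure.map (fun p : Euc dΘ × Euc dU => concatE p.1 p.2) (π.prod 𝕌))
                G0).toReal + 1) := by
  classical
  set μ := Measure.map (fun p : Euc dΘ × Euc dU => concatE p.1 p.2) (π.prod 𝕌) with hμdef
  have hcmap : Continuous (fun p : Euc dΘ × Euc dU => concatE p.1 p.2) := continuous_concatE_pair
  haveI : IsProbabilityMeasure μ := Measure.isProbabilityMeasure_map hcmap.measurable.aemeasurable
  -- the θ-marginal 4th moment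
  have hMθeq : ∫⁻ z, (‖projFst dΘ dU z‖₊ : ℝ≥0∞)^4 ∂μ = ∫⁻ θ, (‖θ‖₊:ℝ≥0∞)^4 ∂π := by
    have hm1 : Measurable fun z : Euc (dΘ + dU) => (‖projFst dΘ dU z‖₊ : ℝ≥0∞)^4 :=
      ((continuous_projFst.nnnorm.measurable).coe_nnreal_ennreal).pow_const 4
    have hm2 : Measurable fun θ : Euc dΘ => ((‖θ‖₊ : ℝ≥0∞))^4 :=
      (measurable_nnnorm.coe_nnreal_ennreal).pow_const 4
    rw [hμdef, lintegral_map hm1 hcmap.measurable]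
    simp only [projFst_concatE]
    have : ∫⁻ p : Euc dΘ × Euc dU, (‖p.1‖₊:ℝ≥0∞)^4 ∂(π.prod 𝕌)
        = ∫⁻ θ, (‖θ‖₊:ℝ≥0∞)^4 ∂(Measure.map Prod.fst (π.prod 𝕌)) :=
      (lintegral_map hm2 measurable_fst).symm
    rw [this, Measure.map_fst_prod, measure_univ, one_smul]
  have hMθfin : ∫⁻ z, (‖projFst dΘ dU z‖₊ : ℝ≥0∞)^4 ∂μ ≠ ⊤ := by
    rw [hMθeq]; exact logconcave_moment4 π hπ
  set Mθ := (∫⁻ z, (‖projFst dΘ dU z‖₊ : ℝ≥0∞)^4 ∂μ).toReal with hMθdef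
  have hMθ0 : 0 ≤ Mθ := ENNReal.toReal_nonneg
  refine ⟨16*Kgrow^2*(Mθ+1), by positivity, ?_⟩
  intro r hr hgrow G0 hG0 hW
  set X : Euc (dΘ + dU) → ℝ := fun z => r (concatE (G0 z) (projFst dΘ dU z)) with hXdef
  have hcontV : Continuous fun z : Euc (dΘ+dU) => concatE (G0 z) (projFst dΘ dU z) := by
    exact continuous_concatE_pair.comp (hG0.continuous.prodMk continuous_projFst)
  have hcontX : Continuous X := by exact hr.continuous.comp hcontV
  have haesm : AEStronglyMeasurable X μ := hcontX.aestronglyMeasurable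
  have hWr0 : 0 ≤ (W14pow4 μ G0).toReal := ENNReal.toReal_nonneg
  -- pointwise bound
  have key : ∀ z, (X z - r 0)^2
      ≤ 16*Kgrow^2*((‖G0 z‖^4 + ‖projFst dΘ dU z‖^4) + 1) := by
    intro z
    set v := concatE (G0 z) (projFst dΘ dU z) with hv
    have hmvt : ‖r v - r 0‖ ≤ (Kgrow*(‖v‖+1)) * ‖v - 0‖ := by
      refine Convex.norm_image_sub_le_of_norm_fderiv_le
        (fun w _ => (hr.differentiable one_ne_zero).differentiableAt)
        (fun w hw => ?_) (convex_closedBall 0 ‖v‖)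
        (Metric.mem_closedBall_self (norm_nonneg v))
        (mem_closedBall_zero_iff.mpr le_rfl)
      refine le_trans (hgrow w) ?_
      have hwv : ‖w‖ ≤ ‖v‖ := mem_closedBall_zero_iff.mp hw
      nlinarith
    rw [sub_zero] at hmvt
    have h1 : (X z - r 0)^2 ≤ (Kgrow*(‖v‖+1)*‖v‖)^2 := by
      have hXz : X z = r v := rfl
      rw [hXz, ← sq_abs (r v - r 0), ← Real.norm_eq_abs]
      exact pow_le_pow_left₀ (norm_nonneg _) hmvt 2
    have h2 : ‖v‖^2 = ‖G0 z‖^2 + ‖projFst dΘ dU z‖^2 := concatE_norm_sq _ _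
    set g := ‖G0 z‖
    set p := ‖projFst dΘ dU z‖
    set n := ‖v‖
    have hg : 0 ≤ g := norm_nonneg _
    have hp : 0 ≤ p := norm_nonneg _
    have hn : 0 ≤ n := norm_nonneg _
    have h4 : n^4 = (g^2+p^2)^2 := by rw [← h2]; ring
    have hstep : (n+1)^2*n^2 ≤ 16*((g^4+p^4)+1) := by
      nlinarith [sq_nonneg (n*(n-1)), sq_nonneg (g^2-p^2), sq_nonneg (g^2-1), sq_nonneg (p^2-1),
        sq_nonneg n, h2, h4, hg, hp, hn]
    have h5 : (Kgrow*(n+1)*n)^2 = Kgrow^2*((n+1)^2*n^2) := by ring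
    have h6 : Kgrow^2*((n+1)^2*n^2) ≤ Kgrow^2*(16*((g^4+p^4)+1)) :=
      mul_le_mul_of_nonneg_left hstep (sq_nonneg Kgrow)
    calc (X z - r 0)^2 ≤ (Kgrow*(n+1)*n)^2 := h1
      _ = Kgrow^2*((n+1)^2*n^2) := h5
      _ ≤ Kgrow^2*(16*((g^4+p^4)+1)) := h6
      _ = 16*Kgrow^2*((g^4+p^4)+1) := by ring
  -- integrability
  have hG4fin : ∫⁻ z, (‖G0 z‖₊:ℝ≥0∞)^4 ∂μ ≠ ⊤ := by
    intro h
    exact hW (by simp only [W14pow4]; exact ENNReal.add_eq_top.mpr (Or.inl h))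
  have hIG : Integrable (fun z => ‖G0 z‖^4) μ := by
    refine ⟨(hG0.continuous.norm.pow 4).aestronglyMeasurable, ?_⟩
    have heq : ∀ z : Euc (dΘ+dU), ((‖(‖G0 z‖^4 : ℝ)‖₊ : ℝ≥0∞)) = (‖G0 z‖₊:ℝ≥0∞)^4 := fun z => by
      rw [nnnorm_pow, nnnorm_norm, ENNReal.coe_pow]
    show ∫⁻ z, ((‖(‖G0 z‖^4 : ℝ)‖₊ : ℝ≥0∞)) ∂μ < ⊤
    rw [lintegral_congr heq]
    exact lt_top_iff_ne_top.mpr hG4fin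
  have hIP : Integrable (fun z => ‖projFst dΘ dU z‖^4) μ := by
    refine ⟨(continuous_projFst.norm.pow 4).aestronglyMeasurable, ?_⟩
    have heq : ∀ z : Euc (dΘ+dU),
        ((‖(‖projFst dΘ dU z‖^4 : ℝ)‖₊ : ℝ≥0∞)) = (‖projFst dΘ dU z‖₊:ℝ≥0∞)^4 := fun z => by
      rw [nnnorm_pow, nnnorm_norm, ENNReal.coe_pow]
    show ∫⁻ z, ((‖(‖projFst dΘ dU z‖^4 : ℝ)‖₊ : ℝ≥0∞)) ∂μ < ⊤
    rw [lintegral_congr heq]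
    exact lt_top_iff_ne_top.mpr hMθfin
  have hIg : Integrable (fun z => 16*Kgrow^2*((‖G0 z‖^4 + ‖projFst dΘ dU z‖^4) + 1)) μ :=
    ((hIG.add hIP).add (integrable_const 1)).const_mul _
  by_cases hL2 : MemLp X 2 μ
  · have hYL2 : MemLp (fun z => X z - r 0) 2 μ := hL2.sub (memLp_const _)
    have hXint : Integrable X μ := hL2.integrable one_le_two
    have hX2int : Integrable (fun z => X z^2) μ := hL2.integrable_sq
    have hvar_eq : variance X μ = variance (fun z => X z - r 0) μ := by
      rw [variance_eq_sub hL2, variance_eq_sub hYL2]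
      have e1 : ∫ z, (fun z => X z - r 0) z ∂μ = (∫ z, X z ∂μ) - r 0 := by
        rw [integral_sub hXint (integrable_const _), integral_const, probReal_univ]
        simp
      have i1 : Integrable (fun z => 2*(r 0)*X z - (r 0)^2) μ := by
        exact (hXint.const_mul (2*(r 0))).sub (integrable_const _)
      have e2 : ∫ z, ((fun z => X z - r 0)^2) z ∂μ
          = (∫ z, X z^2 ∂μ) - (2*(r 0)*(∫ z, X z ∂μ) - (r 0)^2) := by
        have heq : ∀ z, ((fun z => X z - r 0)^2) z = X z^2 - (2*(r 0)*X z - (r 0)^2) := by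
          intro z; simp only [Pi.pow_apply]; ring
        rw [integral_congr_ae (Filter.Eventually.of_forall heq), integral_sub hX2int i1,
          integral_sub (hXint.const_mul (2*(r 0))) (integrable_const _),
          integral_const_mul, integral_const, probReal_univ]
        simp
      simp only [Pi.pow_apply] at *
      rw [e1, e2]
      ring
    have hvle : variance (fun z => X z - r 0) μ ≤ ∫ z, ((fun z => X z - r 0)^2) z ∂μ :=
      variance_le_expectation_sq (haesm.sub aestronglyMeasurable_const)
    have hle2 : ∫ z, ((fun z => X z - r 0)^2) z ∂μ
        ≤ ∫ z, 16*Kgrow^2*((‖G0 z‖^4 + ‖projFst dΘ dU z‖^4) + 1) ∂μ := by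
      refine integral_mono_of_nonneg (Filter.Eventually.of_forall fun z => by
        simp only [Pi.pow_apply]; positivity) hIg (Filter.Eventually.of_forall fun z => ?_)
      simpa only [Pi.pow_apply] using key z
    have hRHS : ∫ z, 16*Kgrow^2*((‖G0 z‖^4 + ‖projFst dΘ dU z‖^4) + 1) ∂μ
        = 16*Kgrow^2*((((∫⁻ z, (‖G0 z‖₊:ℝ≥0∞)^4 ∂μ).toReal + Mθ)) + 1) := by
      have hIGP : Integrable (fun z => ‖G0 z‖^4 + ‖projFst dΘ dU z‖^4) μ := by
        exact hIG.add hIP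
      rw [integral_const_mul, integral_add hIGP (integrable_const _),
        integral_add hIG hIP, integral_const, probReal_univ]
      rw [integral_norm_pow4 μ G0 hG0.continuous.aestronglyMeasurable,
        integral_norm_pow4 μ (projFst dΘ dU) continuous_projFst.aestronglyMeasurable]
      simp [hMθdef]
    have hWr : (∫⁻ z, (‖G0 z‖₊:ℝ≥0∞)^4 ∂μ).toReal ≤ (W14pow4 μ G0).toReal := by
      refine ENNReal.toReal_mono hW ?_
      simp only [W14pow4]
      exact le_self_add
    have hfinal : variance X μ
        ≤ 16*Kgrow^2*((((∫⁻ z, (‖G0 z‖₊:ℝ≥0∞)^4 ∂μ).toReal + Mθ)) + 1) := by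
      rw [hvar_eq]
      exact le_trans hvle (le_trans hle2 (le_of_eq hRHS))
    have hA0 : 0 ≤ (∫⁻ z, (‖G0 z‖₊:ℝ≥0∞)^4 ∂μ).toReal := ENNReal.toReal_nonneg
    have hsum : ((∫⁻ z, (‖G0 z‖₊:ℝ≥0∞)^4 ∂μ).toReal + Mθ) + 1
        ≤ (Mθ+1)*((W14pow4 μ G0).toReal+1) := by
      nlinarith [mul_nonneg hMθ0 hWr0, hWr]
    calc variance X μ
        ≤ 16*Kgrow^2*((((∫⁻ z, (‖G0 z‖₊:ℝ≥0∞)^4 ∂μ).toReal + Mθ)) + 1) := hfinal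
      _ ≤ 16*Kgrow^2*((Mθ+1)*((W14pow4 μ G0).toReal+1)) :=
          mul_le_mul_of_nonneg_left hsum (by positivity)
      _ = 16*Kgrow^2*(Mθ+1)*((W14pow4 μ G0).toReal+1) := by ring
  · have hEtop : evariance X μ = ⊤ := evariance_eq_top haesm hL2
    have hzero : variance X μ = 0 := by
      rw [show variance X μ = (evariance X μ).toReal from rfl, hEtop, ENNReal.toReal_top]
    rw [hzero]
    have h16 : (0:ℝ) ≤ 16*Kgrow^2*(Mθ+1) := by positivity
    exact mul_nonneg h16 (by linarith [hWr0])
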